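/- For 0 < α < 1 and λ > 0, the total mass of the density w_+(s) = λ (sin(απ)/π) s^{α−1} / (s^{2α} − 2λ s^α cos(απ) + λ²) over (0,∞) equals C = 1/α − 1. -/

import Mathlib

open Real MeasureTheory

noncomputable def wPlus (α l s : ℝ) : ℝ :=
  l * (Real.sin (α * π) / π) *
    (s ^ (α - 1) / (s ^ (2 * α) - 2 * l * s ^ α * Real.cos (α * π) + l ^ 2))

lemma key_integral {θ : ℝ} (h0 : 0 < θ) (h1 : θ < π) :
    ∫ u in Set.Ioi (0 : ℝ), Real.sin θ / (u ^ 2 - 2 * u * Real.cos θ + 1) = π - θ := by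
  have hs : 0 < Real.sin θ := Real.sin_pos_of_pos_of_lt_pi h0 h1
  set c := Real.cos θ with hc
  have hpyth : Real.sin θ ^ 2 + c ^ 2 = 1 := Real.sin_sq_add_cos_sq θ
  have hD : ∀ u : ℝ, 0 < u ^ 2 - 2 * u * c + 1 := by
    intro u
    nlinarith [sq_nonneg (u - c), mul_pos hs hs]
  set F : ℝ → ℝ := fun u => Real.arctan ((u - c) / Real.sin θ) with hF
  have hderiv : ∀ u : ℝ, HasDerivAt F (Real.sin θ / (u ^ 2 - 2 * u * c + 1)) u := by
    intro u
    have h1' : HasDerivAt (fun u : ℝ => (u - c) / Real.sin θ) (1 / Real.sin θ) u := by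
      simpa using ((hasDerivAt_id u).sub_const c).div_const (Real.sin θ)
    have h2 := h1'.arctan
    convert h2 using 1
    have hne := (hD u).ne'
    field_simp
    have hne2 : u * (u - 2 * c) + 1 ≠ 0 := by intro h; nlinarith [hD u]
    rw [div_eq_one_iff_eq hne2]
    nlinarith [hpyth]
  have hlim : Filter.Tendsto F Filter.atTop (nhds (π / 2)) := by
    have h1' : Filter.Tendsto (fun u : ℝ => (u - c) / Real.sin θ) Filter.atTop Filter.atTop := by
      apply Filter.Tendsto.atTop_div_const hs
      exact Filter.tendsto_atTop_add_const_right _ (-c) Filter.tendsto_id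
    exact (Real.tendsto_arctan_atTop.mono_right nhdsWithin_le_nhds).comp h1'
  have := integral_Ioi_of_hasDerivAt_of_nonneg
    (g := F) (g' := fun u => Real.sin θ / (u ^ 2 - 2 * u * c + 1)) (a := 0)
    (hderiv 0).continuousAt.continuousWithinAt
    (fun x _ => hderiv x)
    (fun x _ => le_of_lt (div_pos hs (hD x)))
    hlim
  rw [this]
  have harct : Real.arctan ((0 - c) / Real.sin θ) = θ - π / 2 := by
    have : (0 - c) / Real.sin θ = Real.tan (θ - π / 2) := by
      rw [Real.tan_eq_sin_div_cos, Real.sin_sub_pi_div_two, Real.cos_sub_pi_div_two]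
      ring_nf
      rw [hc, mul_comm]
    rw [this, Real.arctan_tan (by linarith) (by linarith)]
  show π / 2 - Real.arctan ((0 - c) / Real.sin θ) = π - θ
  rw [harct]; ring

theorem wPlus_total_mass {α l : ℝ} (hα : 0 < α) (hα1 : α < 1) (hl : 0 < l) :
    ∫ s in Set.Ioi (0 : ℝ), wPlus α l s = 1 / α - 1 := by
  set θ := α * π with hθ
  have hπ := Real.pi_pos
  have h0 : 0 < θ := by positivity
  have h1 : θ < π := by
    rw [hθ]; nlinarith
  have hs : 0 < Real.sin θ := Real.sin_pos_of_pos_of_lt_pi h0 h1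
  set c := Real.cos θ with hc
  have hpyth : Real.sin θ ^ 2 + c ^ 2 = 1 := Real.sin_sq_add_cos_sq θ
  have hD1 : ∀ u : ℝ, 0 < u ^ 2 - 2 * u * c + 1 := by
    intro u; nlinarith [sq_nonneg (u - c), mul_pos hs hs]
  have hDl : ∀ u : ℝ, 0 < u ^ 2 - 2 * l * u * c + l ^ 2 := by
    intro u
    nlinarith [sq_nonneg (u - l * c), mul_pos (mul_pos hl hs) (mul_pos hl hs)]
  set g : ℝ → ℝ := fun u => (l * (Real.sin θ / π) / α) / (u ^ 2 - 2 * l * u * c + l ^ 2)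
    with hg
  have step1 : ∫ s in Set.Ioi (0 : ℝ), wPlus α l s
      = ∫ x in Set.Ioi (0 : ℝ), (α * x ^ (α - 1)) • g (x ^ α) := by
    refine setIntegral_congr_fun measurableSet_Ioi (fun x hx => ?_)
    have hx : (0 : ℝ) < x := hx
    have h2α : x ^ (2 * α) = (x ^ α) ^ 2 := by
      rw [mul_comm, Real.rpow_mul hx.le, Real.rpow_two]
    rw [wPlus, smul_eq_mul, hg, h2α]
    have hDne := (hDl (x ^ α)).ne'
    field_simp
    ring
  rw [step1, integral_comp_rpow_Ioi_of_pos hα]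
  have step2 : ∫ u in Set.Ioi (0 : ℝ), g u
      = l • ∫ x in Set.Ioi (0 : ℝ), g (l * x) := by
    rw [integral_comp_mul_left_Ioi g 0 hl, mul_zero, smul_smul,
      mul_inv_cancel₀ hl.ne', one_smul]
  rw [step2]
  have step3 : ∀ x : ℝ, g (l * x)
      = (1 / (α * π * l)) * (Real.sin θ / (x ^ 2 - 2 * x * c + 1)) := by
    intro x
    have h1' := (hD1 x).ne'
    show l * (Real.sin θ / π) / α / ((l * x) ^ 2 - 2 * l * (l * x) * c + l ^ 2)
        = 1 / (α * π * l) * (Real.sin θ / (x ^ 2 - 2 * x * c + 1))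
    have hden : (l * x) ^ 2 - 2 * l * (l * x) * c + l ^ 2
        = l ^ 2 * (x ^ 2 - 2 * x * c + 1) := by ring
    rw [hden]
    field_simp
  simp_rw [step3]
  rw [integral_const_mul, key_integral h0 h1, smul_eq_mul, hθ]
  field_simp
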